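/- Let F be a field and let A, B be m×m matrices over F such that AB = BA and B is unipotent, i.e., (B − 1)^m = 0. Then the characteristic polynomial of the product AB equals the characteristic polynomial of A. (In particular, for an element g of a matrix group with Jordan decomposition g = s·u into commuting semisimple and unipotent parts, the characteristic polynomial of g — and hence each coefficient of det(t + 1 − Ad_g) — depends only on the semisimple part s.) -/

import Mathlib

open Polynomial Matrix

/-- Evaluating the characteristic polynomial at `r` gives `det (r • 1 - M)`. -/
lemma my_eval_charpoly {K : Type*} [CommRing K] {n : Type*} [DecidableEq n] [Fintype n]
    (M : Matrix n n K) (r : K) : M.charpoly.eval r = (r • (1 : Matrix n n K) - M).det := by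
  rw [Matrix.charpoly, _root_.eval_det, matPolyEquiv_charmatrix]
  congr 1
  simp [Matrix.scalar, Matrix.smul_eq_diagonal_mul]

/-- Over a field, a nilpotent matrix has characteristic polynomial `X ^ card`. -/
lemma my_charpoly_nilpotent {K : Type*} [Field K] {n : Type*} [DecidableEq n] [Fintype n]
    {N : Matrix n n K} (hN : IsNilpotent N) :
    N.charpoly = X ^ (Fintype.card n) := by
  have h := Matrix.isNilpotent_charpoly_sub_pow_of_isNilpotent hN
  have : N.charpoly - X ^ (Fintype.card n) = 0 := h.eq_zero
  exact sub_eq_zero.mp this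

/-- `det (1 + N) = 1` for nilpotent `N` over a field. -/
lemma my_det_one_add_nilpotent {K : Type*} [Field K] {n : Type*} [DecidableEq n] [Fintype n]
    {N : Matrix n n K} (hN : IsNilpotent N) :
    (1 + N).det = 1 := by
  have h1 : (1 + N : Matrix n n K) = (-1 : K) • (((-1 : K)) • 1 - N) := by
    simp [smul_sub, smul_smul]
  rw [h1, Matrix.det_smul, ← my_eval_charpoly, my_charpoly_nilpotent hN]
  simp [← mul_pow]

/-- A charmatrix mapped by a ring hom out of the polynomial ring. -/
lemma my_charmatrix_map {R S : Type*} [CommRing R] [CommRing S] {n : Type*} [DecidableEq n]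
    [Fintype n] (M : Matrix n n R) (f : R[X] →+* S) :
    (charmatrix M).map f = f X • (1 : Matrix n n S) - M.map (f.comp C) := by
  ext i j
  by_cases h : i = j
  · subst h; simp [Matrix.one_apply]
  · simp [h, Matrix.one_apply, Ne.symm h]

/-- Key step: subtracting a commuting nilpotent matrix does not change the determinant,
provided the determinant is a unit. -/
lemma my_det_sub_nilpotent {K : Type*} [Field K] {n : Type*} [DecidableEq n] [Fintype n]
    {M N : Matrix n n K} (hMN : Commute M N) (hN : IsNilpotent N) (hM : IsUnit M.det) :
    (M - N).det = M.det := by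
  obtain ⟨u, hu⟩ := (Matrix.isUnit_iff_isUnit_det M).mpr hM
  subst hu
  have hinv : Commute (↑u⁻¹ : Matrix n n K) N := hMN.units_inv_left
  have hnil : IsNilpotent ((↑u⁻¹ : Matrix n n K) * N) := by
    obtain ⟨k, hk⟩ := hN
    exact ⟨k, by rw [hinv.mul_pow, hk, mul_zero]⟩
  have hfact : (↑u : Matrix n n K) - N = (↑u : Matrix n n K) * (1 - (↑u⁻¹ : Matrix n n K) * N) := by
    rw [mul_sub, mul_one, ← mul_assoc, Units.mul_inv, one_mul]
  rw [hfact, Matrix.det_mul]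
  rw [sub_eq_add_neg, my_det_one_add_nilpotent hnil.neg, mul_one]

set_option synthInstance.maxHeartbeats 1000000 in
set_option maxHeartbeats 1600000 in
theorem charpoly_mul_unipotent_commute
    (F : Type*) [Field F] (m : ℕ) (A B : Matrix (Fin m) (Fin m) F)
    (hcomm : A * B = B * A) (huni : (B - 1) ^ m = 0) :
    Matrix.charpoly (A * B) = Matrix.charpoly A := by
  classical
  set φ : F[X] →+* RatFunc F := algebraMap F[X] (RatFunc F) with hφdef
  have hinj : Function.Injective φ := RatFunc.algebraMap_injective F
  apply hinj
  have hmapdet : ∀ C : Matrix (Fin m) (Fin m) F,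
      φ C.charpoly = ((charmatrix C).map φ).det := by
    intro C
    rw [Matrix.charpoly, RingHom.map_det]
    rfl
  rw [hmapdet, hmapdet, my_charmatrix_map, my_charmatrix_map]
  set ψ : F →+* RatFunc F := φ.comp C with hψdef
  set A' := A.map ψ with hA'
  set B' := B.map ψ with hB'
  have hABmap : (A * B).map ψ = A' * B' := by
    have := _root_.map_mul ψ.mapMatrix A B
    exact this
  have hcomm' : A' * B' = B' * A' := by
    have := congrArg (fun M => ψ.mapMatrix M) hcomm
    simpa [_root_.map_mul] using this
  have huni' : (B' - 1) ^ m = 0 := by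
    have := congrArg (fun M => ψ.mapMatrix M) huni
    simpa [map_pow, map_sub] using this
  rw [hABmap]
  set c : RatFunc F := φ X with hc
  set M := c • (1 : Matrix (Fin m) (Fin m) (RatFunc F)) - A' with hM
  set N := A' * (B' - 1) with hN
  have hAB' : Commute A' B' := hcomm'
  have hAB1 : Commute A' (B' - 1) := hAB'.sub_right (Commute.one_right A')
  have hnilN : IsNilpotent N := ⟨m, by rw [hN, hAB1.mul_pow, huni', mul_zero]⟩
  have hcommMN : Commute M N := by
    have h1 : Commute (c • (1 : Matrix (Fin m) (Fin m) (RatFunc F))) N :=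
      (Commute.one_left N).smul_left c
    have h2 : Commute A' N := (Commute.refl A').mul_right hAB1
    exact h1.sub_left h2
  have hdetM : IsUnit M.det := by
    have h1 : ((charmatrix A).map φ).det = M.det := by rw [my_charmatrix_map]
    have h2 : φ A.charpoly ≠ 0 := by
      intro h
      exact (Matrix.charpoly_monic A).ne_zero (hinj (by simpa using h))
    rw [← h1, ← hmapdet]
    exact isUnit_iff_ne_zero.mpr h2
  have hgoal : c • (1 : Matrix (Fin m) (Fin m) (RatFunc F)) - A' * B' = M - N := by
    rw [hM, hN, mul_sub, mul_one]
    abel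
  rw [hgoal, my_det_sub_nilpotent hcommMN hnilN hdetM]
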